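/- For pairwise anticommuting elements x₁,…,x_m each squaring to ±1, define z₁ = x₁, z₂ = x₂, and for i ≥ 3: z_i = (x₁⋯x_{i-1})x_i if i is odd and z_i = (x₁⋯x_{i-2})x_i if i is even. Then z_{2j-1} and z_{2j} anticommute for each j, while z_i commutes with z_k whenever {i,k} is not such a consecutive odd-even pair. -/

import Mathlib

section Aux
variable {A : Type*} [Ring A] {m : ℕ}

private lemma negOnePowCentral (n : ℕ) (a : A) : a * (-1:A)^n = (-1:A)^n * a := by
  rcases Nat.even_or_odd n with h | h
  · rw [h.neg_one_pow]; simp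
  · rw [h.neg_one_pow]; simp

private lemma auxOne (x : Fin m → A)
    (hanti : ∀ i j : Fin m, i ≠ j → x i * x j = -(x j * x i))
    (t : Fin m) (l : List (Fin m)) :
    x t * (l.map x).prod
      = (-1:A)^(l.countP (fun k => decide (k ≠ t))) * ((l.map x).prod * x t) := by
  induction l with
  | nil => simp
  | cons k l ih =>
    rw [List.map_cons, List.prod_cons, List.countP_cons]
    set c := l.countP (fun k => decide (k ≠ t)) with hc
    by_cases hk : k = t
    · have hd : (decide (k ≠ t)) = false := by simp [hk]
      rw [hd]
      have comm : x t * x k = x k * x t := by rw [hk]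
      calc x t * (x k * (l.map x).prod)
          = (x t * x k) * (l.map x).prod := by rw [mul_assoc]
        _ = x k * (x t * (l.map x).prod) := by rw [comm, mul_assoc]
        _ = x k * ((-1:A)^c * ((l.map x).prod * x t)) := by rw [ih]
        _ = (-1:A)^c * (x k * ((l.map x).prod * x t)) := by
            rw [← mul_assoc, negOnePowCentral, mul_assoc]
        _ = (-1:A)^(c + if false = true then 1 else 0) * ((x k * (l.map x).prod) * x t) := by
            rw [← mul_assoc (x k)]; norm_num
    · have hd : (decide (k ≠ t)) = true := by simp [hk]
      rw [hd]
      calc x t * (x k * (l.map x).prod)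
          = (x t * x k) * (l.map x).prod := by rw [mul_assoc]
        _ = (-(x k * x t)) * (l.map x).prod := by rw [hanti t k (fun h => hk h.symm)]
        _ = -(x k * (x t * (l.map x).prod)) := by rw [neg_mul, mul_assoc]
        _ = -(x k * ((-1:A)^c * ((l.map x).prod * x t))) := by rw [ih]
        _ = -((-1:A)^c * (x k * ((l.map x).prod * x t))) := by
            rw [← mul_assoc, negOnePowCentral, mul_assoc]
        _ = (-1:A)^(c + if true = true then 1 else 0) * ((x k * (l.map x).prod) * x t) := by
            rw [if_pos rfl, pow_succ, mul_assoc ((-1:A)^c), neg_one_mul, mul_neg,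
              ← mul_assoc (x k)]

private lemma auxTwo (x : Fin m → A)
    (hanti : ∀ i j : Fin m, i ≠ j → x i * x j = -(x j * x i))
    (l₁ l₂ : List (Fin m)) :
    (l₁.map x).prod * (l₂.map x).prod
      = (-1:A)^((l₁.map (fun t => l₂.countP (fun k => decide (k ≠ t)))).sum)
          * ((l₂.map x).prod * (l₁.map x).prod) := by
  induction l₁ with
  | nil => simp
  | cons t l₁ ih =>
    rw [List.map_cons, List.prod_cons, List.map_cons, List.sum_cons]
    set c := l₂.countP (fun k => decide (k ≠ t)) with hc
    set N := (l₁.map (fun t => l₂.countP (fun k => decide (k ≠ t)))).sum with hN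
    calc (x t * (l₁.map x).prod) * (l₂.map x).prod
        = x t * ((l₁.map x).prod * (l₂.map x).prod) := by rw [mul_assoc]
      _ = x t * ((-1:A)^N * ((l₂.map x).prod * (l₁.map x).prod)) := by rw [ih]
      _ = (-1:A)^N * (x t * ((l₂.map x).prod * (l₁.map x).prod)) := by
          rw [← mul_assoc, negOnePowCentral, mul_assoc]
      _ = (-1:A)^N * ((x t * (l₂.map x).prod) * (l₁.map x).prod) := by rw [mul_assoc]
      _ = (-1:A)^N * (((-1:A)^c * ((l₂.map x).prod * x t)) * (l₁.map x).prod) := by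
          rw [auxOne x hanti]
      _ = (-1:A)^(c + N) * ((l₂.map x).prod * (x t * (l₁.map x).prod)) := by
          rw [pow_add, mul_assoc ((-1:A)^c), ← mul_assoc ((-1:A)^N), ← negOnePowCentral,
            mul_assoc ((-1:A)^c), mul_assoc ((l₂.map x).prod), mul_assoc ((-1:A)^c)]

private lemma countPne (t : Fin m) (l : List (Fin m)) :
    l.countP (fun k => decide (k ≠ t)) + l.count t = l.length := by
  induction l with
  | nil => simp
  | cons a l ih =>
    rw [List.countP_cons, List.count_cons, List.length_cons]
    by_cases h : a = t
    · have h1 : (decide (a ≠ t)) = false := by simp [h]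
      have h2 : (a == t) = true := by simp [h]
      rw [h1, h2]
      simp only [Bool.false_eq_true, if_false, if_true]
      omega
    · have h1 : (decide (a ≠ t)) = true := by simp [h]
      have h2 : (a == t) = false := by simp [h]
      rw [h1, h2]
      simp only [Bool.false_eq_true, if_false, if_true]
      omega

private lemma mapValFinRange (n : ℕ) : ((List.finRange n).map Fin.val) = List.range n := by
  rw [List.finRange_eq_pmap_range, List.map_pmap]
  simp

private lemma countPrange (c : ℕ) (n : ℕ) :
    (List.range n).countP (fun v => decide (v < c)) = min c n := by
  induction n with
  | zero => simp
  | succ n ih =>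
    rw [List.range_succ, List.countP_append, ih]
    by_cases h : n < c
    · have : (decide (n < c)) = true := by simp [h]
      simp only [List.countP_singleton, this, if_true]
      omega
    · have : (decide (n < c)) = false := by simp [h]
      simp only [List.countP_singleton, this, Bool.false_eq_true, if_false]
      omega

private lemma lenFilter (c : ℕ) (hc : c ≤ m) :
    (((List.finRange m).filter (fun k : Fin m => decide (k.val < c)))).length = c := by
  rw [← List.countP_eq_length_filter]
  have h1 : (List.finRange m).countP (fun k : Fin m => decide (k.val < c))
      = ((List.finRange m).map Fin.val).countP (fun v => decide (v < c)) := by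
    rw [List.countP_map]; rfl
  rw [h1, mapValFinRange, countPrange]
  omega

private lemma countFilter (c : ℕ) (t : Fin m) :
    ((List.finRange m).filter (fun k : Fin m => decide (k.val < c))).count t
      = if t.val < c then 1 else 0 := by
  by_cases h : t.val < c
  · rw [if_pos h]
    refine List.count_eq_one_of_mem (List.Nodup.filter _ (List.nodup_finRange m)) ?_
    rw [List.mem_filter]
    exact ⟨List.mem_finRange t, by simpa using h⟩
  · rw [if_neg h]
    rw [List.count_eq_zero]
    intro hmem
    rw [List.mem_filter] at hmem
    exact h (by simpa using hmem.2)

end Aux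

section Aux2
variable {A : Type*} [Ring A] {m : ℕ}

private lemma sumConst {α : Type*} (l : List α) (g : α → ℕ) (K : ℕ)
    (h : ∀ t ∈ l, g t = K) : (l.map g).sum = l.length * K := by
  induction l with
  | nil => simp
  | cons a l ih =>
    rw [List.map_cons, List.sum_cons, ih (fun t ht => h t (List.mem_cons_of_mem a ht)),
      h a List.mem_cons_self, List.length_cons]
    ring

private lemma gval (cj : ℕ) (hcj : cj ≤ m) (j t : Fin m) :
    ((((List.finRange m).filter (fun k : Fin m => decide (k.val < cj))) ++ [j]).countP
      (fun k => decide (k ≠ t)))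
    = cj - (if t.val < cj then 1 else 0) + (if j = t then 0 else 1) := by
  rw [List.countP_append]
  have h1 := countPne t ((List.finRange m).filter (fun k : Fin m => decide (k.val < cj)))
  rw [← List.countP_eq_length_filter] at h1
  have hlen : (List.finRange m).countP (fun k : Fin m => decide (k.val < cj)) = cj := by
    rw [List.countP_eq_length_filter]
    exact lenFilter cj hcj
  rw [hlen, countFilter cj t] at h1
  have h2 : List.countP (fun k => decide (k ≠ t)) [j] = if j = t then 0 else 1 := by
    by_cases h : j = t <;> simp [h]
  rw [h2]
  by_cases ht : t.val < cj
  · rw [if_pos ht] at h1 ⊢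
    omega
  · rw [if_neg ht] at h1 ⊢
    omega

end Aux2

theorem reduced_basis_commutation {A : Type*} [Ring A] [Algebra ℂ A] (m : ℕ)
    (x : Fin m → A)
    (hsq : ∀ i, x i * x i = 1 ∨ x i * x i = -1)
    (hanti : ∀ i j, i ≠ j → x i * x j = -(x j * x i))
    (z : Fin m → A)
    (hz : ∀ i : Fin m, z i =
      (((List.finRange m).filter
          (fun k => k.val < if i.val % 2 = 0 then i.val else i.val - 1)).map x).prod * x i) :
    (∀ i j : Fin m, i ≠ j → i.val / 2 = j.val / 2 → z i * z j = -(z j * z i)) ∧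
    (∀ i j : Fin m, i.val / 2 ≠ j.val / 2 → z i * z j = z j * z i) := by
  classical
  have hz' : ∀ i : Fin m,
      z i = ((((List.finRange m).filter (fun k : Fin m => decide (k.val < 2 * (i.val / 2))))
        ++ [i]).map x).prod := by
    intro i
    have e : (if i.val % 2 = 0 then i.val else i.val - 1) = 2 * (i.val / 2) := by
      split <;> omega
    rw [hz i, List.map_append, List.prod_append, List.map_singleton, List.prod_singleton, e]
  have swap : ∀ i j : Fin m, z i * z j =
      (-1:A)^(((((List.finRange m).filter (fun k : Fin m => decide (k.val < 2 * (i.val / 2))))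
          ++ [i]).map
          (fun t => ((((List.finRange m).filter
              (fun k : Fin m => decide (k.val < 2 * (j.val / 2)))) ++ [j]).countP
            (fun k => decide (k ≠ t))))).sum)
        * (z j * z i) := by
    intro i j
    rw [hz' i, hz' j]
    exact auxTwo x hanti _ _
  constructor
  · -- anticommuting case
    intro i j hne h2
    have hcm : 2 * (i.val / 2) ≤ m := by have := i.isLt; omega
    have hcj : 2 * (i.val / 2) ≤ j.val := by omega
    have hswap := swap i j
    rw [← h2] at hswap
    have hN : (((((List.finRange m).filter
          (fun k : Fin m => decide (k.val < 2 * (i.val / 2)))) ++ [i]).map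
          (fun t => ((((List.finRange m).filter
              (fun k : Fin m => decide (k.val < 2 * (i.val / 2)))) ++ [j]).countP
            (fun k => decide (k ≠ t))))).sum)
        = 2 * (i.val / 2) * (2 * (i.val / 2)) + (2 * (i.val / 2) + 1) := by
      rw [List.map_append, List.sum_append, List.map_singleton, List.sum_singleton]
      simp only [gval (2 * (i.val / 2)) hcm j]
      rw [sumConst _ _ (2 * (i.val / 2)) ?_, lenFilter _ hcm]
      · have h1 : ¬ (i.val < 2 * (i.val / 2)) := by omega
        have h3 : j ≠ i := fun h => hne h.symm
        rw [if_neg h1, if_neg h3]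
        simp
      · intro t ht
        have htv : t.val < 2 * (i.val / 2) := by
          have := (List.mem_filter.mp ht).2
          simpa using this
        have hjt : j ≠ t := by
          intro h
          rw [← h] at htv
          omega
        rw [if_pos htv, if_neg hjt]
        omega
    rw [hN] at hswap
    have hodd : Odd (2 * (i.val / 2) * (2 * (i.val / 2)) + (2 * (i.val / 2) + 1)) := by
      have he : Even (2 * (i.val / 2)) := even_two_mul _
      have h1 : Even (2 * (i.val / 2) * (2 * (i.val / 2)) + 2 * (i.val / 2)) :=
        (he.mul_left _).add he
      have : 2 * (i.val / 2) * (2 * (i.val / 2)) + (2 * (i.val / 2) + 1)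
          = (2 * (i.val / 2) * (2 * (i.val / 2)) + 2 * (i.val / 2)) + 1 := by omega
      rw [this]
      exact h1.add_one
    rw [hodd.neg_one_pow, neg_one_mul] at hswap
    exact hswap
  · -- commuting case
    have main : ∀ i j : Fin m, 2 * (i.val / 2) < 2 * (j.val / 2) → z i * z j = z j * z i := by
      intro i j hlt
      have hdm : 2 * (j.val / 2) ≤ m := by have := j.isLt; omega
      have hd2 : 2 * (i.val / 2) + 2 ≤ 2 * (j.val / 2) := by omega
      have hswap := swap i j
      have hN : (((((List.finRange m).filter
            (fun k : Fin m => decide (k.val < 2 * (i.val / 2)))) ++ [i]).map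
            (fun t => ((((List.finRange m).filter
                (fun k : Fin m => decide (k.val < 2 * (j.val / 2)))) ++ [j]).countP
              (fun k => decide (k ≠ t))))).sum)
          = (2 * (i.val / 2) + 1) * (2 * (j.val / 2)) := by
        rw [List.map_append, List.sum_append, List.map_singleton, List.sum_singleton]
        simp only [gval (2 * (j.val / 2)) hdm j]
        have hji : j ≠ i := by
          intro h
          rw [h] at hlt
          omega
        rw [sumConst _ _ (2 * (j.val / 2)) ?_, lenFilter _ (by have := i.isLt; omega)]
        · have h1 : i.val < 2 * (j.val / 2) := by omega
          rw [if_pos h1, if_neg hji, Nat.sub_add_cancel (by omega : 1 ≤ 2 * (j.val / 2))]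
          ring
        · intro t ht
          have htv : t.val < 2 * (i.val / 2) := by
            have := (List.mem_filter.mp ht).2
            simpa using this
          have hjt : j ≠ t := by
            intro h
            rw [← h] at htv
            omega
          rw [if_pos (by omega : t.val < 2 * (j.val / 2)), if_neg hjt]
          omega
      rw [hN] at hswap
      have heven : Even ((2 * (i.val / 2) + 1) * (2 * (j.val / 2))) :=
        (even_two_mul _).mul_left _
      rw [heven.neg_one_pow, one_mul] at hswap
      exact hswap
    intro i j hdiv
    rcases Nat.lt_or_ge (i.val / 2) (j.val / 2) with h | h
    · exact main i j (by omega)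
    · exact (main j i (by omega)).symm
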